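/- Let R be a commutative ring and let i : P → Q be a chain map of acyclic ℕ-indexed chain complexes of R-modules such that for every n the map i_n : P_n → Q_n is injective, and such that all the modules P_n, Q_n and all the cokernels coker(i_n) are projective R-modules. Then there exists a chain map s : Q → P with s ∘ i = id_P. -/

import Mathlib

open CategoryTheory CategoryTheory.Limits

noncomputable section

universe u

namespace RetractAux

variable {R : Type u} [CommRing R]

/-- Lift through a map whose range contains the range of `g`, using projectivity. -/
theorem lift_through {A B C : Type u} [AddCommGroup A] [AddCommGroup B] [AddCommGroup C]
    [Module R A] [Module R B] [Module R C] [Module.Projective R C]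
    (f : A →ₗ[R] B) (g : C →ₗ[R] B) (hle : LinearMap.range g ≤ LinearMap.range f) :
    ∃ k : C →ₗ[R] A, f ∘ₗ k = g := by
  obtain ⟨k, hk⟩ := Module.projective_lifting_property f.rangeRestrict
    (g.codRestrict (LinearMap.range f) (fun c => hle ⟨c, rfl⟩))
    f.surjective_rangeRestrict
  refine ⟨k, ?_⟩
  ext x
  have := congrArg Subtype.val (LinearMap.congr_fun hk x)
  simpa using this

variable (P : ChainComplex (ModuleCat.{u} R) ℕ)

/-- abbreviation for the differential as a linear map -/
def D (n : ℕ) : P.X (n+1) →ₗ[R] P.X n := (P.d (n+1) n).hom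

theorem D0_surj (h : P.ExactAt 0) : Function.Surjective (D P 0) := by
  rw [P.exactAt_iff' 1 0 0 (by simp) (by simp)] at h
  rw [ShortComplex.moduleCat_exact_iff] at h
  intro x
  obtain ⟨y, hy⟩ := h x (by
    have : P.d 0 0 = 0 := P.shape 0 0 (by simp)
    show (P.d 0 0) x = 0
    rw [this]; rfl)
  exact ⟨y, hy⟩

theorem ker_le_range (n : ℕ) (h : P.ExactAt (n+1)) :
    LinearMap.ker (D P n) ≤ LinearMap.range (D P (n+1)) := by
  rw [P.exactAt_iff' (n+2) (n+1) n (by simp) (by simp [ChainComplex.next])] at h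
  rw [ShortComplex.moduleCat_exact_iff] at h
  intro x hx
  exact h x hx

theorem D_comp_D (n : ℕ) : (D P n) ∘ₗ (D P (n+1)) = 0 := by
  ext x
  have := P.d_comp_d (n+2) (n+1) n
  exact congrFun (congrArg (fun (f : P.X (n+2) ⟶ P.X n) => (f : P.X (n+2) → P.X n)) this) x

variable (hP : ∀ n, P.ExactAt n) (hPproj : ∀ n, Module.Projective R (P.X n))

/-- first step of contracting homotopy -/
def h0 : P.X 0 →ₗ[R] P.X 1 :=
  (Module.projective_lifting_property (h := hPproj 0) (D P 0) LinearMap.id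
    (D0_surj P (hP 0))).choose

theorem h0_spec : (D P 0) ∘ₗ h0 P hP hPproj = LinearMap.id :=
  (Module.projective_lifting_property (h := hPproj 0) (D P 0) LinearMap.id
    (D0_surj P (hP 0))).choose_spec

/-- The correction lemma: given the homotopy identity one degree lower, lift the next one. -/
theorem lift_next (n : ℕ) (hex : P.ExactAt (n+2)) (hproj : Module.Projective R (P.X (n+2)))
    (a : P.X n →ₗ[R] P.X (n+1)) (b : P.X (n+1) →ₗ[R] P.X (n+2))
    (hab : (D P (n+1)).comp b + a.comp (D P n) = LinearMap.id) :
    ∃ c : P.X (n+2) →ₗ[R] P.X (n+3),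
      (D P (n+2)).comp c + b.comp (D P (n+1)) = LinearMap.id := by
  set g : P.X (n+2) →ₗ[R] P.X (n+2) := LinearMap.id - b.comp (D P (n+1)) with hg
  have hle : LinearMap.range g ≤ LinearMap.range (D P (n+2)) := by
    refine le_trans ?_ (ker_le_range P (n+1) hex)
    rintro x ⟨y, rfl⟩
    rw [LinearMap.mem_ker]
    have h2 : (LinearMap.id : P.X (n+1) →ₗ[R] P.X (n+1)) - (D P (n+1)) ∘ₗ b
        = a.comp (D P n) := by rw [← hab]; abel
    have : (D P (n+1)) (g y) = (D P (n+1)) y - ((D P (n+1)) ∘ₗ b) ((D P (n+1)) y) := by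
      simp [hg, LinearMap.sub_apply, LinearMap.comp_apply]
    rw [this, show (D P (n+1)) y - ((D P (n+1)) ∘ₗ b) ((D P (n+1)) y)
        = ((LinearMap.id : P.X (n+1) →ₗ[R] P.X (n+1)) - (D P (n+1)) ∘ₗ b) ((D P (n+1)) y)
        from by simp [LinearMap.sub_apply], h2]
    rw [LinearMap.comp_apply, show (D P n) ((D P (n+1)) y) = 0
        from LinearMap.congr_fun (D_comp_D P n) y]
    simp
  obtain ⟨c, hc⟩ := lift_through (C := P.X (n+2)) (D P (n+2)) g hle
  exact ⟨c, by rw [hc, hg]; abel⟩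

/-- base-step lift: produce `h 1`. -/
theorem lift_base (hex : P.ExactAt 1) (hproj : Module.Projective R (P.X 1))
    (a : P.X 0 →ₗ[R] P.X 1) (ha : (D P 0).comp a = LinearMap.id) :
    ∃ c : P.X 1 →ₗ[R] P.X 2,
      (D P 1).comp c + a.comp (D P 0) = LinearMap.id := by
  set g : P.X 1 →ₗ[R] P.X 1 := LinearMap.id - a.comp (D P 0) with hg
  have hle : LinearMap.range g ≤ LinearMap.range (D P 1) := by
    refine le_trans ?_ (ker_le_range P 0 hex)
    rintro x ⟨y, rfl⟩
    rw [LinearMap.mem_ker]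
    have : (D P 0) (g y) = (D P 0) y - ((D P 0) ∘ₗ a) ((D P 0) y) := by
      simp [hg, LinearMap.sub_apply, LinearMap.comp_apply]
    rw [this, ha]
    simp
  obtain ⟨c, hc⟩ := lift_through (C := P.X 1) (D P 1) g hle
  exact ⟨c, by rw [hc, hg]; abel⟩

/-- The recursive data: at stage `n`, the maps `h n` and `h (n+1)` with the identity at `n+1`. -/
def contr : ∀ n : ℕ, {p : (P.X n →ₗ[R] P.X (n+1)) × (P.X (n+1) →ₗ[R] P.X (n+2)) //
    (D P (n+1)).comp p.2 + p.1.comp (D P n) = LinearMap.id} :=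
  Nat.rec
    ⟨(h0 P hP hPproj,
      (lift_base P (hP 1) (hPproj 1) (h0 P hP hPproj) (h0_spec P hP hPproj)).choose),
      (lift_base P (hP 1) (hPproj 1) (h0 P hP hPproj) (h0_spec P hP hPproj)).choose_spec⟩
    (fun n prev =>
      ⟨(prev.val.2, (lift_next P n (hP (n+2)) (hPproj (n+2)) prev.val.1 prev.val.2
          prev.property).choose),
        (lift_next P n (hP (n+2)) (hPproj (n+2)) prev.val.1 prev.val.2
          prev.property).choose_spec⟩)

/-- the contracting homotopy -/
def h (n : ℕ) : P.X n →ₗ[R] P.X (n+1) := (contr P hP hPproj n).val.1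

theorem h_zero : h P hP hPproj 0 = h0 P hP hPproj := rfl

theorem h_succ (n : ℕ) : h P hP hPproj (n+1) = (contr P hP hPproj n).val.2 := rfl

theorem h_spec0 : (D P 0).comp (h P hP hPproj 0) = LinearMap.id := by
  rw [h_zero]; exact h0_spec P hP hPproj

theorem h_spec (n : ℕ) :
    (D P (n+1)).comp (h P hP hPproj (n+1)) + (h P hP hPproj n).comp (D P n)
      = LinearMap.id := by
  rw [h_succ]; exact (contr P hP hPproj n).property

/-- A degreewise retraction from projectivity of the cokernel. -/
theorem exists_retr {M N : Type u} [AddCommGroup M] [AddCommGroup N]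
    [Module R M] [Module R N] (f : M →ₗ[R] N) (hinj : Function.Injective f)
    (hproj : Module.Projective R (N ⧸ LinearMap.range f)) :
    ∃ r : N →ₗ[R] M, r ∘ₗ f = LinearMap.id := by
  set π := (LinearMap.range f).mkQ with hπ
  obtain ⟨σ, hσ⟩ := Module.projective_lifting_property (h := hproj) π LinearMap.id
    (Submodule.mkQ_surjective _)
  set pr : N →ₗ[R] N := LinearMap.id - σ.comp π with hpr
  have hmem : ∀ q : N, pr q ∈ LinearMap.range f := by
    intro q
    have : π (pr q) = 0 := by
      have := LinearMap.congr_fun hσ (π q)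
      simp only [hpr, LinearMap.sub_apply, LinearMap.id_apply, LinearMap.comp_apply, map_sub]
      rw [show π (σ (π q)) = π q from this]
      simp
    rwa [← LinearMap.mem_ker, Submodule.ker_mkQ] at this
  set e := LinearEquiv.ofInjective f hinj with he
  refine ⟨e.symm.toLinearMap ∘ₗ LinearMap.codRestrict (LinearMap.range f) pr hmem, ?_⟩
  ext x
  have h1 : pr (f x) = f x := by
    have : π (f x) = 0 := by
      rw [← LinearMap.mem_ker, Submodule.ker_mkQ]
      exact ⟨x, rfl⟩
    simp [hpr, this]
  simp only [LinearMap.comp_apply, LinearMap.id_apply, LinearEquiv.coe_coe]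
  have h2 : (LinearMap.codRestrict (LinearMap.range f) pr hmem) (f x) = e x := by
    apply Subtype.ext
    simp only [LinearMap.codRestrict_apply, h1, he]
    rfl
  rw [h2, LinearEquiv.symm_apply_apply]

end RetractAux

open RetractAux

/-- Let `i : P ⟶ Q` be a chain map between acyclic `ℕ`-indexed chain
complexes of `R`-modules which is degreewise injective, and assume all `P_n`, `Q_n` and
all cokernels `Q_n / im(i_n)` are projective `R`-modules.  Then `i` admits a chain-level
retraction `s : Q ⟶ P` with `i ≫ s = 𝟙 P`. -/
theorem exists_retraction_of_acyclic (R : Type u) [CommRing R]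
    (P Q : ChainComplex (ModuleCat.{u} R) ℕ) (i : P ⟶ Q)
    (hP : ∀ n, P.ExactAt n) (hQ : ∀ n, Q.ExactAt n)
    (hinj : ∀ n, Function.Injective (i.f n))
    (hPproj : ∀ n, Module.Projective R (P.X n))
    (hQproj : ∀ n, Module.Projective R (Q.X n))
    (hcoker : ∀ n, Module.Projective R (Q.X n ⧸ LinearMap.range (i.f n).hom)) :
    ∃ s : Q ⟶ P, i ≫ s = 𝟙 P := by
  choose r hr using fun n => exists_retr (i.f n).hom (hinj n) (hcoker n)
  set hl := h P hP hPproj with hhl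
  -- the retraction, degreewise
  set sf : ∀ n, Q.X n →ₗ[R] P.X n := fun n =>
    Nat.casesOn n ((D P 0) ∘ₗ hl 0 ∘ₗ r 0)
      (fun m => (D P (m+1)) ∘ₗ hl (m+1) ∘ₗ r (m+1) + hl m ∘ₗ r m ∘ₗ (D Q m)) with hsf
  have icomm : ∀ n (x : P.X (n+1)), (D Q n) (i.f (n+1) x) = i.f n ((D P n) x) := by
    intro n x
    have := i.comm (n+1) n
    exact congrFun (congrArg (fun (f : P.X (n+1) ⟶ Q.X n) => (f : P.X (n+1) → Q.X n)) this) x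
  have hrr : ∀ n (x : P.X n), r n (i.f n x) = x := fun n x => LinearMap.congr_fun (hr n) x
  have hdd : ∀ n (x : P.X (n+2)), (D P n) ((D P (n+1)) x) = 0 :=
    fun n x => LinearMap.congr_fun (D_comp_D P n) x
  have hddQ : ∀ n (x : Q.X (n+2)), (D Q n) ((D Q (n+1)) x) = 0 :=
    fun n x => LinearMap.congr_fun (D_comp_D Q n) x
  refine ⟨{ f := fun n => ModuleCat.ofHom (sf n), comm' := ?_ }, ?_⟩
  · rintro i' j (rfl : j + 1 = i')
    show ModuleCat.ofHom (sf (j+1)) ≫ (P.d (j+1) j) = (Q.d (j+1) j) ≫ ModuleCat.ofHom (sf j)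
    ext x
    show (D P j) (sf (j+1) x) = sf j ((D Q j) x)
    cases j with
    | zero =>
        show (D P 0) (((D P 1) ∘ₗ hl 1 ∘ₗ r 1 + hl 0 ∘ₗ r 0 ∘ₗ (D Q 0)) x)
          = ((D P 0) ∘ₗ hl 0 ∘ₗ r 0) ((D Q 0) x)
        simp only [LinearMap.add_apply, LinearMap.comp_apply, map_add]
        rw [hdd 0 (hl 1 (r 1 x))]
        simp
    | succ m =>
        show (D P (m+1)) (((D P (m+2)) ∘ₗ hl (m+2) ∘ₗ r (m+2)
            + hl (m+1) ∘ₗ r (m+1) ∘ₗ (D Q (m+1))) x)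
          = ((D P (m+1)) ∘ₗ hl (m+1) ∘ₗ r (m+1) + hl m ∘ₗ r m ∘ₗ (D Q m)) ((D Q (m+1)) x)
        simp only [LinearMap.add_apply, LinearMap.comp_apply, map_add]
        rw [hdd (m+1) (hl (m+2) (r (m+2) x)), hddQ m x]
        simp
  · apply HomologicalComplex.hom_ext
    intro n
    ext x
    show sf n (i.f n x) = x
    cases n with
    | zero =>
        show ((D P 0) ∘ₗ hl 0 ∘ₗ r 0) (i.f 0 x) = x
        simp only [LinearMap.comp_apply]
        rw [hrr 0 x]
        exact LinearMap.congr_fun (h_spec0 P hP hPproj) x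
    | succ m =>
        show ((D P (m+1)) ∘ₗ hl (m+1) ∘ₗ r (m+1) + hl m ∘ₗ r m ∘ₗ (D Q m)) (i.f (m+1) x) = x
        simp only [LinearMap.add_apply, LinearMap.comp_apply]
        rw [hrr (m+1) x, icomm m x, hrr m ((D P m) x)]
        exact LinearMap.congr_fun (h_spec P hP hPproj m) x

end
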